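/- Let X=(V,E) be a finite simple connected graph with n ≥ 3 vertices, let T be a spanning tree of E, let F be a nonempty subset of E − T, and let ε ∈ F. Then the orbits of the coset F + 𝓑 under the edge-flipping group W_E(X) coincide with the orbits of F + 𝓑 under the subgroup W_E(X)_{T∪{ε}} generated by {ρ_{ε'} : ε' ∈ T ∪ {ε}}; moreover, if n is odd the whole coset F + 𝓑 is a single orbit, while if n is even the orbits are exactly the two sets F + 𝓑_e and F + 𝓑_o, where 𝓑_e := {G ∈ 𝓑 : sw(G) is even} and 𝓑_o := {G ∈ 𝓑 : sw(G) is odd}. -/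

import Mathlib

open scoped Classical

noncomputable section

variable {V : Type*}

/-- The indicator (over `F₂`) of whether a `Sym2` element has exactly one endpoint in `U`. -/
def edgeCutFun (U : Set V) : Sym2 V → ZMod 2 :=
  Sym2.lift ⟨fun x y => (if x ∈ U then 1 else 0) + (if y ∈ U then 1 else 0),
    fun _ _ => add_comm _ _⟩

/-- The edge cut `E(U)`, as an element of the edge space `𝓔 = (X.edgeSet → ZMod 2)`. -/
def edgeCut (X : SimpleGraph V) (U : Set V) : X.edgeSet → ZMod 2 :=
  fun e => edgeCutFun U e.1

/-- The bond space `𝓑`, the span of the vertex edge cuts. -/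
def bondSpace (X : SimpleGraph V) : Submodule (ZMod 2) (X.edgeSet → ZMod 2) :=
  Submodule.span (ZMod 2) (Set.range fun v => edgeCut X {v})

lemma edgeCut_single_mem_bondSpace (X : SimpleGraph V) (v : V) :
    edgeCut X {v} ∈ bondSpace X :=
  Submodule.subset_span ⟨v, rfl⟩

/-- generic flip: `G ↦ G + G i • C`, a linear endomorphism of `ι → ZMod 2`. -/
def flipLin {ι : Type*} (i : ι) (C : ι → ZMod 2) :
    (ι → ZMod 2) →ₗ[ZMod 2] (ι → ZMod 2) where
  toFun G := G + G i • C
  map_add' G H := by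
    funext f
    simp only [Pi.add_apply, Pi.smul_apply, smul_eq_mul]
    ring
  map_smul' c G := by
    funext f
    simp only [Pi.add_apply, Pi.smul_apply, smul_eq_mul, RingHom.id_apply]
    ring

lemma flipLin_flipLin {ι : Type*} (i : ι) (C : ι → ZMod 2) (hC : C i = 0)
    (G : ι → ZMod 2) : flipLin i C (flipLin i C G) = G := by
  funext f
  have h2 : (2 : ZMod 2) = 0 := by decide
  simp only [flipLin, LinearMap.coe_mk, AddHom.coe_mk, Pi.add_apply, Pi.smul_apply,
    smul_eq_mul, hC, mul_zero, add_zero]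
  ring_nf
  rw [h2, mul_zero, add_zero]

/-- generic flip as a unit of the endomorphism ring (element of `GL`). -/
def flipGL {ι : Type*} (i : ι) (C : ι → ZMod 2) (hC : C i = 0) :
    ((ι → ZMod 2) →ₗ[ZMod 2] (ι → ZMod 2))ˣ where
  val := flipLin i C
  inv := flipLin i C
  val_inv := LinearMap.ext fun G => flipLin_flipLin i C hC G
  inv_val := LinearMap.ext fun G => flipLin_flipLin i C hC G

lemma edgeCutFun_self (e : Sym2 V) : edgeCutFun {v | v ∈ e} e = 0 := by
  induction e using Sym2.ind with
  | _ x y =>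
    simp [edgeCutFun, Sym2.mem_iff]
    decide

/-- The move `ρ_ε` of the edge-flipping puzzle, as an element of `GL(𝓔)`. -/
def edgeFlip (X : SimpleGraph V) (ε : X.edgeSet) :
    ((X.edgeSet → ZMod 2) →ₗ[ZMod 2] (X.edgeSet → ZMod 2))ˣ :=
  flipGL ε (edgeCut X {v | v ∈ (ε : Sym2 V)}) (edgeCutFun_self ε.1)

/-- The edge-flipping group `W_E(X)`. -/
def edgeFlippingGroup (X : SimpleGraph V) :
    Subgroup ((X.edgeSet → ZMod 2) →ₗ[ZMod 2] (X.edgeSet → ZMod 2))ˣ :=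
  Subgroup.closure (Set.range (edgeFlip X))

/-- Indicator of the neighborhood `N(v)`, in the vertex space `𝒱 = (V → ZMod 2)`. -/
def nbrFun (X : SimpleGraph V) (v : V) : V → ZMod 2 :=
  fun w => if X.Adj v w then 1 else 0

/-- The move `s_v` of the vertex-flipping puzzle, as an element of `GL(𝒱)`. -/
def vertexFlip (X : SimpleGraph V) (v : V) :
    ((V → ZMod 2) →ₗ[ZMod 2] (V → ZMod 2))ˣ :=
  flipGL v (nbrFun X v) (by simp [nbrFun])

/-- The vertex-flipping group `W_V(X)`. -/
def vertexFlippingGroup (X : SimpleGraph V) :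
    Subgroup ((V → ZMod 2) →ₗ[ZMod 2] (V → ZMod 2))ˣ :=
  Subgroup.closure (Set.range (vertexFlip X))

end

/-- The orbit of a configuration `G` under a subgroup `H` of `GL(𝓔)`. -/
def orbitOf {V : Type*} (X : SimpleGraph V)
    (H : Subgroup ((X.edgeSet → ZMod 2) →ₗ[ZMod 2] (X.edgeSet → ZMod 2))ˣ)
    (G : X.edgeSet → ZMod 2) : Set (X.edgeSet → ZMod 2) :=
  {G' | ∃ g ∈ H, g.val G = G'}

/-- The configuration corresponding to a set `F` of edges (its indicator function in `𝓔`). -/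
noncomputable def chiFinset {V : Type*} (X : SimpleGraph V) (F : Finset X.edgeSet) :
    X.edgeSet → ZMod 2 :=
  fun e => if e ∈ F then 1 else 0
set_option linter.unusedSectionVars false
open scoped symmDiff
set_option maxHeartbeats 1000000

section TokenSliding
variable {V : Type*} (Y : SimpleGraph V)

/-- single token slide along an edge of `Y`. -/
def Slide (S S' : Finset V) : Prop :=
  ∃ x y, Y.Adj x y ∧ x ∈ S ∧ y ∉ S ∧ S' = insert y (S.erase x)

def Slides : Finset V → Finset V → Prop := Relation.ReflTransGen (Slide Y)

lemma slide_symm {S S' : Finset V} (h : Slide Y S S') : Slide Y S' S := by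
  obtain ⟨x, y, hadj, hx, hy, rfl⟩ := h
  have hxy : x ≠ y := hadj.ne
  refine ⟨y, x, hadj.symm, Finset.mem_insert_self _ _, ?_, ?_⟩
  · simp [Finset.mem_insert, Finset.mem_erase, hxy]
  · rw [Finset.erase_insert (by simp [Finset.mem_erase]; tauto)]
    rw [Finset.insert_erase hx]

lemma slides_symm {S S' : Finset V} (h : Slides Y S S') : Slides Y S' S :=
  haveI : Std.Symm (Slide Y) := ⟨fun _ _ hs => slide_symm Y hs⟩
  Std.Symm.symm (r := Relation.ReflTransGen (Slide Y)) _ _ h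

/-- Pull a token from `a` to `b` along a walk from `b` to `a`. -/
lemma pull {b a : V} (p : Y.Walk b a) : ∀ (A : Finset V), a ∈ A → b ∉ A →
    Slides Y A (insert b (A.erase a)) := by
  induction p with
  | nil =>
    intro A ha hb; exact absurd ha hb
  | @cons b c a h q ih =>
    intro A ha hb
    by_cases hc : c ∈ A
    · have hstep : Slide Y A (insert b (A.erase c)) := ⟨c, b, h.symm, hc, hb, rfl⟩
      by_cases hca : c = a
      · subst hca; exact Relation.ReflTransGen.single hstep
      · have hac : a ≠ c := fun h' => hca h'.symm
        have hba : b ≠ a := fun h' => hb (h' ▸ ha)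
        have ha1 : a ∈ insert b (A.erase c) := by
          simp [Finset.mem_insert, Finset.mem_erase, hac, ha]
        have hc1 : c ∉ insert b (A.erase c) := by
          simp [Finset.mem_insert, Finset.mem_erase, h.ne']
        have h2 := ih _ ha1 hc1
        have heq : insert c ((insert b (A.erase c)).erase a) = insert b (A.erase a) := by
          ext t
          simp only [Finset.mem_insert, Finset.mem_erase]
          constructor
          · rintro (rfl | ⟨hta, (rfl | ⟨htc, htA⟩)⟩)
            · exact Or.inr ⟨hca, hc⟩
            · exact Or.inl rfl
            · exact Or.inr ⟨hta, htA⟩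
          · rintro (rfl | ⟨hta, htA⟩)
            · exact Or.inr ⟨hba, Or.inl rfl⟩
            · by_cases htc : t = c
              · exact Or.inl htc
              · exact Or.inr ⟨hta, Or.inr ⟨htc, htA⟩⟩
        rw [heq] at h2
        exact (Relation.ReflTransGen.single hstep).trans h2
    · have hca : c ≠ a := fun h' => hc (h' ▸ ha)
      have h1 := ih A ha hc
      have hbA : b ∉ insert c (A.erase a) := by
        simp only [Finset.mem_insert, Finset.mem_erase, not_or]
        exact ⟨h.ne, fun hh => hb hh.2⟩
      have hstep : Slide Y (insert c (A.erase a)) (insert b ((insert c (A.erase a)).erase c)) :=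
        ⟨c, b, h.symm, Finset.mem_insert_self _ _, hbA, rfl⟩
      have heq : (insert c (A.erase a)).erase c = A.erase a := by
        rw [Finset.erase_insert (by simp [Finset.mem_erase]; tauto)]
      rw [heq] at hstep
      exact h1.trans (Relation.ReflTransGen.single hstep)

/-- token sliding transitivity on a connected graph. -/
lemma ts (hY : Y.Connected) : ∀ (N : ℕ) (A B : Finset V), (B \ A).card = N →
    A.card = B.card → Slides Y A B := by
  intro N
  induction N using Nat.strong_induction_on with
  | _ N ih =>
    intro A B hN hcard
    rcases Finset.eq_empty_or_nonempty (B \ A) with hBA | ⟨b, hb⟩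
    · have hsub : B ⊆ A := Finset.sdiff_eq_empty_iff_subset.mp hBA
      have : B = A := Finset.eq_of_subset_of_card_le hsub (le_of_eq hcard)
      rw [← this]
      exact Relation.ReflTransGen.refl
    · rw [Finset.mem_sdiff] at hb
      obtain ⟨hbB, hbA⟩ := hb
      have hAB : (A \ B).Nonempty := by
        by_contra h
        rw [Finset.not_nonempty_iff_eq_empty, Finset.sdiff_eq_empty_iff_subset] at h
        have : A = B := Finset.eq_of_subset_of_card_le h (le_of_eq hcard.symm)
        exact hbA (this ▸ hbB)
      obtain ⟨a, ha⟩ := hAB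
      rw [Finset.mem_sdiff] at ha
      obtain ⟨haA, haB⟩ := ha
      obtain ⟨w⟩ := hY.preconnected b a
      have h1 : Slides Y A (insert b (A.erase a)) := pull Y w A haA hbA
      set A1 := insert b (A.erase a) with hA1
      have hbej : b ∉ A.erase a := by simp [Finset.mem_erase, hbA]
      have hcard1 : A1.card = A.card := by
        rw [hA1, Finset.card_insert_of_notMem hbej, Finset.card_erase_of_mem haA]
        have : 1 ≤ A.card := Finset.card_pos.2 ⟨a, haA⟩
        omega
      have hsd : B \ A1 = (B \ A).erase b := by
        ext t
        simp only [Finset.mem_sdiff, hA1, Finset.mem_insert, Finset.mem_erase, not_or]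
        constructor
        · rintro ⟨htB, htb, hte⟩
          refine ⟨htb, htB, fun htA => hte ⟨fun hta => haB (hta ▸ htB), htA⟩⟩
        · rintro ⟨htb, htB, htA⟩
          exact ⟨htB, htb, fun h' => htA h'.2⟩
      have hNpos : 1 ≤ N := by
        rw [← hN]
        exact Finset.card_pos.2 ⟨b, Finset.mem_sdiff.2 ⟨hbB, hbA⟩⟩
      have hcard2 : (B \ A1).card = N - 1 := by
        rw [hsd, Finset.card_erase_of_mem (Finset.mem_sdiff.2 ⟨hbB, hbA⟩), hN]
      exact h1.trans (ih (N - 1) (by omega) A1 B hcard2 (by rw [hcard1, hcard]))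

end TokenSliding

section Algebra
variable {V : Type*} [Fintype V] (X : SimpleGraph V)

lemma edge_cases (e : X.edgeSet) : ∃ x y, X.Adj x y ∧ (e : Sym2 V) = s(x, y) := by
  obtain ⟨v, hv⟩ := e
  induction v using Sym2.ind with
  | _ x y => exact ⟨x, y, hv, rfl⟩

lemma edgeCut_apply' (U : Set V) (e : X.edgeSet) (x y : V) (h : (e : Sym2 V) = s(x, y)) :
    edgeCut X U e = (if x ∈ U then 1 else 0) + (if y ∈ U then 1 else 0) := by
  simp [edgeCut, h, edgeCutFun]

lemma flip_apply (ε' : X.edgeSet) (G : X.edgeSet → ZMod 2) :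
    (edgeFlip X ε').val G = G + G ε' • edgeCut X {v | v ∈ (ε' : Sym2 V)} := rfl

lemma flip_invol (ε' : X.edgeSet) (G : X.edgeSet → ZMod 2) :
    (edgeFlip X ε').val ((edgeFlip X ε').val G) = G :=
  flipLin_flipLin ε' (edgeCut X {v | v ∈ (ε' : Sym2 V)}) (edgeCutFun_self ε'.1) G

lemma edgeFlip_inv (ε' : X.edgeSet) : (edgeFlip X ε')⁻¹ = edgeFlip X ε' :=
  Units.ext rfl

lemma addSelf (x : X.edgeSet → ZMod 2) : x + x = 0 := by
  funext e
  have : ∀ a : ZMod 2, a + a = 0 := by decide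
  exact this _

lemma eq_of_add_eq_zero' {a b : X.edgeSet → ZMod 2} (h : a + b = 0) : a = b := by
  calc a = a + b + b := by rw [add_assoc, addSelf X b, add_zero]
  _ = b := by rw [h, zero_add]

lemma sum_edgeCut : ∑ v : V, edgeCut X {v} = 0 := by
  funext e
  obtain ⟨x, y, hadj, he⟩ := edge_cases X e
  rw [Finset.sum_apply, Pi.zero_apply]
  rw [Finset.sum_congr rfl (fun v _ => edgeCut_apply' X {v} e x y he)]
  simp only [Set.mem_singleton_iff, Finset.sum_add_distrib]
  rw [Finset.sum_ite_eq Finset.univ x (fun _ => (1 : ZMod 2)),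
    Finset.sum_ite_eq Finset.univ y (fun _ => (1 : ZMod 2))]
  simp
  decide

lemma cutPair (x y : V) (hxy : x ≠ y) :
    edgeCut X {v | v ∈ (s(x, y) : Sym2 V)} = edgeCut X {x} + edgeCut X {y} := by
  funext e
  obtain ⟨a, b, hab, he⟩ := edge_cases X e
  rw [Pi.add_apply, edgeCut_apply' X _ e a b he, edgeCut_apply' X _ e a b he,
    edgeCut_apply' X _ e a b he]
  simp only [Set.mem_setOf_eq, Sym2.mem_iff, Set.mem_singleton_iff]
  by_cases h1 : a = x <;> by_cases h2 : a = y <;> by_cases h3 : b = x <;> by_cases h4 : b = y <;>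
    simp_all <;> decide

lemma sum_symmDiff (f : V → (X.edgeSet → ZMod 2)) (S P : Finset V) :
    ∑ v ∈ S ∆ P, f v = ∑ v ∈ S, f v + ∑ v ∈ P, f v := by
  have h1 : ∑ v ∈ S ∪ P, f v + ∑ v ∈ S ∩ P, f v = ∑ v ∈ S, f v + ∑ v ∈ P, f v :=
    Finset.sum_union_inter
  have h2 : (S ∆ P) ∪ (S ∩ P) = S ∪ P := symmDiff_sup_inf S P
  have hd : Disjoint (S ∆ P) (S ∩ P) := disjoint_symmDiff_inf S P
  have h3 : ∑ v ∈ S ∪ P, f v = ∑ v ∈ S ∆ P, f v + ∑ v ∈ S ∩ P, f v := by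
    rw [← Finset.sum_union hd]
    congr 1
    exact h2.symm
  rw [h3] at h1
  rw [add_assoc] at h1
  rw [addSelf, add_zero] at h1
  exact h1

lemma card_symmDiff_parity (S P : Finset V) :
    (S ∆ P).card % 2 = (S.card + P.card) % 2 := by
  have hd : Disjoint (S ∆ P) (S ∩ P) := disjoint_symmDiff_inf S P
  have h2 : (S ∆ P) ∪ (S ∩ P) = S ∪ P := symmDiff_sup_inf S P
  have h1 : (S ∆ P).card + (S ∩ P).card = (S ∪ P).card := by
    rw [← Finset.card_union_of_disjoint hd]
    congr 1
  have h3 : (S ∪ P).card + (S ∩ P).card = S.card + P.card :=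
    Finset.card_union_add_card_inter S P
  omega

end Algebra

section Main
variable {V : Type*} [Fintype V]

/-- configuration given by `F` plus the bond-space element determined by `S`. -/
noncomputable def conf (X : SimpleGraph V) (F : Finset X.edgeSet) (S : Finset V) : X.edgeSet → ZMod 2 :=
  chiFinset X F + ∑ v ∈ S, edgeCut X {v}

lemma sum_compl (X : SimpleGraph V) (S : Finset V) :
    ∑ v ∈ Finset.univ \ S, edgeCut X {v} = ∑ v ∈ S, edgeCut X {v} := by
  apply eq_of_add_eq_zero' X
  rw [Finset.sum_sdiff (Finset.subset_univ S), sum_edgeCut]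

lemma conf_compl (X : SimpleGraph V) (F : Finset X.edgeSet) (S : Finset V) :
    conf X F (Finset.univ \ S) = conf X F S := by
  simp only [conf]
  rw [sum_compl]

lemma conf_apply (X : SimpleGraph V) (F : Finset X.edgeSet) (S : Finset V) (e : X.edgeSet)
    (x y : V) (he : (e : Sym2 V) = s(x, y)) :
    conf X F S e
      = (if e ∈ F then 1 else 0) + ((if x ∈ S then 1 else 0) + (if y ∈ S then 1 else 0)) := by
  simp only [conf, Pi.add_apply, Finset.sum_apply, chiFinset]
  congr 1
  rw [Finset.sum_congr rfl (fun v _ => edgeCut_apply' X {v} e x y he)]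
  simp only [Set.mem_singleton_iff]
  rw [Finset.sum_add_distrib, Finset.sum_ite_eq S x (fun _ => (1 : ZMod 2)),
    Finset.sum_ite_eq S y (fun _ => (1 : ZMod 2))]

lemma conf_symmDiff (X : SimpleGraph V) (F : Finset X.edgeSet) (S : Finset V) (x y : V)
    (hxy : x ≠ y) :
    conf X F (S ∆ {x, y}) = conf X F S + (edgeCut X {x} + edgeCut X {y}) := by
  simp only [conf]
  rw [sum_symmDiff, Finset.sum_pair hxy]
  abel

lemma flip_conf (X : SimpleGraph V) (F : Finset X.edgeSet) (S : Finset V) (ε' : X.edgeSet)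
    (x y : V) (he : (ε' : Sym2 V) = s(x, y)) (hxy : x ≠ y) (hlit : conf X F S ε' = 1) :
    (edgeFlip X ε').val (conf X F S) = conf X F (S ∆ {x, y}) := by
  rw [flip_apply, hlit, one_smul]
  simp only [he]
  rw [cutPair X x y hxy, conf_symmDiff X F S x y hxy]

lemma symmDiff_pair (S : Finset V) (x y : V) (hx : x ∈ S) (hy : y ∉ S) (hxy : x ≠ y) :
    S ∆ ({x, y} : Finset V) = insert y (S.erase x) := by
  ext t
  simp only [Finset.mem_symmDiff, Finset.mem_insert, Finset.mem_erase, Finset.mem_singleton]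
  constructor
  · rintro (⟨htS, ht⟩ | ⟨(rfl | rfl), htS⟩)
    · push_neg at ht
      exact Or.inr ⟨ht.1, htS⟩
    · exact absurd hx htS
    · exact Or.inl rfl
  · rintro (rfl | ⟨htx, htS⟩)
    · exact Or.inr ⟨Or.inr rfl, hy⟩
    · by_cases hty : t = y
      · exact absurd (hty ▸ hy) (fun h => h htS)
      · exact Or.inl ⟨htS, fun h => h.elim htx hty⟩

/-- One move of the restricted puzzle. -/
def RStep (X : SimpleGraph V) (T : Set (Sym2 V)) (ε : X.edgeSet)
    (G G' : X.edgeSet → ZMod 2) : Prop :=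
  ∃ ε' : X.edgeSet, ((ε' : Sym2 V) ∈ T ∨ ε' = ε) ∧ (edgeFlip X ε').val G = G'

def Reach (X : SimpleGraph V) (T : Set (Sym2 V)) (ε : X.edgeSet) :
    (X.edgeSet → ZMod 2) → (X.edgeSet → ZMod 2) → Prop :=
  Relation.ReflTransGen (RStep X T ε)

lemma reach_symm {X : SimpleGraph V} {T : Set (Sym2 V)} {ε : X.edgeSet}
    {G G' : X.edgeSet → ZMod 2} (h : Reach X T ε G G') : Reach X T ε G' G :=
  haveI : Std.Symm (RStep X T ε) := ⟨fun _ _ hs => by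
      obtain ⟨ε', hm, happ⟩ := hs
      exact ⟨ε', hm, by rw [← happ, flip_invol]⟩⟩
  Std.Symm.symm (r := Relation.ReflTransGen (RStep X T ε)) _ _ h

lemma reach_orbit {X : SimpleGraph V} {T : Set (Sym2 V)} {ε : X.edgeSet}
    {G G' : X.edgeSet → ZMod 2} (h : Reach X T ε G G') :
    G' ∈ orbitOf X (Subgroup.closure
      {g | ∃ ε' : X.edgeSet, ((ε' : Sym2 V) ∈ T ∨ ε' = ε) ∧ g = edgeFlip X ε'}) G := by
  induction h with
  | refl => exact ⟨1, one_mem _, rfl⟩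
  | tail h1 h2 ih =>
    obtain ⟨g, hg, hgq⟩ := ih
    obtain ⟨ε'', hM, happ⟩ := h2
    exact ⟨edgeFlip X ε'' * g, mul_mem (Subgroup.subset_closure ⟨ε'', hM, rfl⟩) hg,
      by rw [Units.val_mul, Module.End.mul_apply, hgq, happ]⟩

variable {X : SimpleGraph V} {T : Set (Sym2 V)} {F : Finset X.edgeSet} {ε : X.edgeSet}

lemma slide_to_step (hTsub : T ⊆ X.edgeSet) (hFT : ∀ e ∈ F, (e : Sym2 V) ∉ T)
    {S S' : Finset V} (h : Slide (SimpleGraph.fromEdgeSet T) S S') :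
    RStep X T ε (conf X F S) (conf X F S') := by
  obtain ⟨x, y, hadj, hx, hy, rfl⟩ := h
  rw [SimpleGraph.fromEdgeSet_adj] at hadj
  obtain ⟨hT, hxy⟩ := hadj
  have hXe : s(x, y) ∈ X.edgeSet := hTsub hT
  refine ⟨⟨s(x, y), hXe⟩, Or.inl hT, ?_⟩
  have hF : (⟨s(x, y), hXe⟩ : X.edgeSet) ∉ F := fun hmem => hFT _ hmem hT
  have hlit : conf X F S ⟨s(x, y), hXe⟩ = 1 := by
    rw [conf_apply X F S _ x y rfl]
    simp [hF, hx, hy]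
  rw [flip_conf X F S _ x y rfl hxy hlit, symmDiff_pair S x y hx hy hxy]

lemma slides_to_reach (hTsub : T ⊆ X.edgeSet) (hFT : ∀ e ∈ F, (e : Sym2 V) ∉ T)
    {S S' : Finset V} (h : Slides (SimpleGraph.fromEdgeSet T) S S') :
    Reach X T ε (conf X F S) (conf X F S') := by
  induction h with
  | refl => exact Relation.ReflTransGen.refl
  | tail h1 h2 ih => exact ih.tail (slide_to_step hTsub hFT h2)

lemma eps_step (hε : ε ∈ F) (S : Finset V) (x y : V) (he : (ε : Sym2 V) = s(x, y))
    (hiff : x ∈ S ↔ y ∈ S) :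
    RStep X T ε (conf X F S) (conf X F (S ∆ {x, y})) := by
  have hxy : x ≠ y := ((X.mem_edgeSet).1 (he ▸ ε.2)).ne
  refine ⟨ε, Or.inr rfl, ?_⟩
  have hlit : conf X F S ε = 1 := by
    rw [conf_apply X F S ε x y he]
    by_cases hx : x ∈ S
    · have hy := hiff.1 hx
      simp only [hε, hx, hy, if_true]
      decide
    · have hy : y ∉ S := fun h => hx (hiff.2 h)
      simp [hε, hx, hy]
  exact flip_conf X F S ε x y he hxy hlit

lemma canon (hTsub : T ⊆ X.edgeSet) (hTconn : (SimpleGraph.fromEdgeSet T).Connected)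
    (hFT : ∀ e ∈ F, (e : Sym2 V) ∉ T) (hε : ε ∈ F) (v₀ : V) :
    ∀ (k : ℕ) (S : Finset V), S.card = k →
      Reach X T ε (conf X F S) (conf X F (if Even k then (∅ : Finset V) else {v₀})) := by
  intro k
  induction k using Nat.strong_induction_on with
  | _ k ih =>
    intro S hS
    by_cases hk0 : k = 0
    · subst hk0
      rw [Finset.card_eq_zero] at hS
      subst hS
      rw [if_pos Even.zero]
      exact Relation.ReflTransGen.refl
    by_cases hk1 : k = 1
    · subst hk1
      rw [if_neg (by decide)]
      exact slides_to_reach hTsub hFT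
        (ts _ hTconn _ S {v₀} rfl (by rw [hS, Finset.card_singleton]))
    · have hk2 : 2 ≤ k := by omega
      obtain ⟨x, y, hadj, he⟩ := edge_cases X ε
      have hxy := hadj.ne
      have hpair : ({x, y} : Finset V).card = 2 := Finset.card_pair hxy
      obtain ⟨S1, hS1sub, hS1card⟩ :=
        Finset.exists_superset_card_eq (s := ({x, y} : Finset V)) (n := k)
          (by rw [hpair]; omega)
          (by rw [← hS]; exact (Finset.card_le_univ S).trans_eq (Finset.card_univ))
      have h1 : Reach X T ε (conf X F S) (conf X F S1) :=
        slides_to_reach hTsub hFT (ts _ hTconn _ S S1 rfl (by rw [hS, hS1card]))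
      have hx1 : x ∈ S1 := hS1sub (by simp)
      have hy1 : y ∈ S1 := hS1sub (by simp)
      have h2 := eps_step (T := T) hε S1 x y he (iff_of_true hx1 hy1)
      have hdiff : S1 ∆ ({x, y} : Finset V) = S1 \ {x, y} := symmDiff_of_ge hS1sub
      have hcard3 : (S1 \ {x, y}).card = k - 2 := by
        rw [Finset.card_sdiff_of_subset hS1sub, hS1card, hpair]
      have h3 := ih (k - 2) (by omega) (S1 \ {x, y}) hcard3
      have hpar : (if Even (k - 2) then (∅ : Finset V) else {v₀})
          = (if Even k then ∅ else {v₀}) :=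
        if_congr (by rw [Nat.even_sub hk2]; simp) rfl rfl
      have h2' : Reach X T ε (conf X F S1) (conf X F (S1 \ {x, y})) := by
        rw [← hdiff]; exact Relation.ReflTransGen.single h2
      have h3' : Reach X T ε (conf X F (S1 \ {x, y}))
          (conf X F (if Even k then ∅ else {v₀})) := by
        rw [← hpar]; exact h3
      exact h1.trans (h2'.trans h3')

lemma main_reach (hTsub : T ⊆ X.edgeSet) (hTconn : (SimpleGraph.fromEdgeSet T).Connected)
    (hFT : ∀ e ∈ F, (e : Sym2 V) ∉ T) (hε : ε ∈ F) (v₀ : V) (S S' : Finset V)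
    (h : S.card % 2 = S'.card % 2 ∨ Odd (Fintype.card V)) :
    Reach X T ε (conf X F S) (conf X F S') := by
  have hcanon := canon hTsub hTconn hFT hε v₀
  rcases h with hpar | hodd
  · have h1 := hcanon S.card S rfl
    have h2 := hcanon S'.card S' rfl
    have heq : (if Even S.card then (∅ : Finset V) else {v₀})
        = (if Even S'.card then ∅ else {v₀}) :=
      if_congr (by rw [Nat.even_iff, Nat.even_iff, hpar]) rfl rfl
    rw [heq] at h1
    exact h1.trans (reach_symm h2)
  · have hlink : Reach X T ε (conf X F (∅ : Finset V)) (conf X F {v₀}) := by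
      have h1 := hcanon (Finset.univ \ {v₀}).card (Finset.univ \ {v₀}) rfl
      have hcard : (Finset.univ \ ({v₀} : Finset V)).card = Fintype.card V - 1 := by
        rw [Finset.card_sdiff_of_subset (Finset.subset_univ _), Finset.card_singleton, Finset.card_univ]
      have heven : Even ((Finset.univ \ ({v₀} : Finset V)).card) := by
        obtain ⟨m, hm⟩ := hodd
        rw [hcard, hm]
        exact ⟨m, by omega⟩
      rw [if_pos heven, conf_compl] at h1
      exact reach_symm h1
    have h1 := hcanon S.card S rfl
    have h2 := hcanon S'.card S' rfl
    by_cases e1 : Even S.card <;> by_cases e2 : Even S'.card <;>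
      simp only [e1, e2, if_true, if_false, if_pos, if_neg, not_false_iff] at h1 h2
    · exact h1.trans (reach_symm h2)
    · exact h1.trans (hlink.trans (reach_symm h2))
    · exact h1.trans ((reach_symm hlink).trans (reach_symm h2))
    · exact h1.trans (reach_symm h2)

end Main

section Sound
variable {V : Type*} [Fintype V]

lemma full_sound (X : SimpleGraph V) (P : (X.edgeSet → ZMod 2) → Prop)
    (hstep : ∀ (ε' : X.edgeSet) (G), P G → P ((edgeFlip X ε').val G)) :
    ∀ g ∈ edgeFlippingGroup X, ∀ G, P G → P (g.val G) := by
  intro g hg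
  have hg' : g ∈ Submonoid.closure
      ((Set.range (edgeFlip X)) ∪ (Set.range (edgeFlip X))⁻¹) := by
    rw [← Subgroup.closure_toSubmonoid]
    exact hg
  clear hg
  induction hg' using Submonoid.closure_induction with
  | mem x hx =>
    rcases hx with hx | hx
    · obtain ⟨ε', rfl⟩ := hx
      exact fun G hG => hstep ε' G hG
    · rw [Set.mem_inv] at hx
      obtain ⟨ε', hx⟩ := hx
      have hxe : x = edgeFlip X ε' := by
        rw [← inv_inv x, ← hx, edgeFlip_inv]
      rw [hxe]
      exact fun G hG => hstep ε' G hG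
  | one => intro G hG; simpa using hG
  | mul x y hx hy ihx ihy =>
    intro G hG
    rw [Units.val_mul, Module.End.mul_apply]
    exact ihx _ (ihy _ hG)

variable {X : SimpleGraph V} {F : Finset X.edgeSet}

lemma gen_coset (ε' : X.edgeSet) (G : X.edgeSet → ZMod 2)
    (h : ∃ B ∈ bondSpace X, G = chiFinset X F + B) :
    ∃ B ∈ bondSpace X, (edgeFlip X ε').val G = chiFinset X F + B := by
  obtain ⟨B, hB, rfl⟩ := h
  obtain ⟨x, y, hadj, he⟩ := edge_cases X ε'
  have hcut : edgeCut X {v | v ∈ (ε' : Sym2 V)} ∈ bondSpace X := by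
    rw [he, cutPair X x y hadj.ne]
    exact add_mem (edgeCut_single_mem_bondSpace X x) (edgeCut_single_mem_bondSpace X y)
  refine ⟨B + (chiFinset X F + B) ε' • edgeCut X {v | v ∈ (ε' : Sym2 V)},
    add_mem hB (Submodule.smul_mem _ _ hcut), ?_⟩
  rw [flip_apply, add_assoc]

lemma gen_parity (hne : Even (Fintype.card V)) (u : V) (k : ℕ) (ε' : X.edgeSet)
    (G : X.edgeSet → ZMod 2)
    (h : ∃ S : Finset V, u ∉ S ∧ S.card % 2 = k ∧ G = conf X F S) :
    ∃ S' : Finset V, u ∉ S' ∧ S'.card % 2 = k ∧ (edgeFlip X ε').val G = conf X F S' := by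
  obtain ⟨S, hu, hk, rfl⟩ := h
  obtain ⟨x, y, hadj, he⟩ := edge_cases X ε'
  have hxy := hadj.ne
  have hcase : conf X F S ε' = 0 ∨ conf X F S ε' = 1 := by
    have : ∀ a : ZMod 2, a = 0 ∨ a = 1 := by decide
    exact this _
  rcases hcase with h0 | h1
  · exact ⟨S, hu, hk, by rw [flip_apply, h0, zero_smul, add_zero]⟩
  · have happ := flip_conf X F S ε' x y he hxy h1
    set S2 := S ∆ ({x, y} : Finset V) with hS2
    have hpar2 : S2.card % 2 = S.card % 2 := by
      have hcs := card_symmDiff_parity S ({x, y} : Finset V)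
      rw [Finset.card_pair hxy, ← hS2] at hcs
      omega
    by_cases hu2 : u ∈ S2
    · refine ⟨Finset.univ \ S2, by simp [hu2], ?_, by rw [happ, ← conf_compl]⟩
      have hle : S2.card ≤ Fintype.card V := by
        rw [← Finset.card_univ]; exact Finset.card_le_univ S2
      have hc : (Finset.univ \ S2).card = Fintype.card V - S2.card := by
        rw [Finset.card_sdiff_of_subset (Finset.subset_univ _), Finset.card_univ]
      obtain ⟨m, hm⟩ := hne
      omega
    · exact ⟨S2, hu2, by omega, happ⟩

lemma rep (u : V) (B : X.edgeSet → ZMod 2) (hB : B ∈ bondSpace X) :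
    ∃ S : Finset V, u ∉ S ∧ B = ∑ v ∈ S, edgeCut X {v} := by
  obtain ⟨c, hc⟩ := (Submodule.mem_span_range_iff_exists_fun (ZMod 2)).1 hB
  set S0 := Finset.univ.filter (fun v => c v = 1) with hS0
  have hsum : ∑ v ∈ S0, edgeCut X {v} = B := by
    rw [← hc]
    have h1 : ∑ v ∈ S0, edgeCut X {v} = ∑ v ∈ S0, c v • edgeCut X {v} :=
      Finset.sum_congr rfl (fun v hv => by
        rw [hS0, Finset.mem_filter] at hv
        rw [hv.2, one_smul])
    rw [h1]
    apply Finset.sum_subset (Finset.filter_subset _ _)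
    intro v _ hv
    rw [← hS0] at hv
    rw [hS0, Finset.mem_filter] at hv
    have hc0 : c v = 0 := by
      have : ∀ a : ZMod 2, a ≠ 1 → a = 0 := by decide
      exact this _ (fun h => hv ⟨Finset.mem_univ v, h⟩)
    rw [hc0, zero_smul]
  by_cases hu : u ∈ S0
  · exact ⟨Finset.univ \ S0, by simp [hu], by rw [sum_compl, hsum]⟩
  · exact ⟨S0, hu, hsum.symm⟩

end Sound

/-- Let `X` be a finite simple connected graph with `n ≥ 3` vertices,
`T` a spanning tree, `F` a nonempty subset of `E - T` and `ε ∈ F`. Then the orbits of the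
coset `F + 𝓑` under `W_E(X)` coincide with the orbits under `W_E(X)_{T ∪ {ε}}`; moreover,
if `n` is odd the whole coset `F + 𝓑` is a single orbit, while if `n` is even the orbits
are exactly the two sets `F + 𝓑_e` and `F + 𝓑_o`, where `𝓑_e` (resp. `𝓑_o`) consists of
the elements of the bond space of even (resp. odd) simple weight with respect to the fixed
vertex `u`. -/
theorem orbits_of_coset {V : Type*} [Fintype V] (X : SimpleGraph V)
    (hconn : X.Connected) (hn : 3 ≤ Fintype.card V)
    (T : Set (Sym2 V)) (hTsub : T ⊆ X.edgeSet)
    (hTcard : T.ncard = Fintype.card V - 1)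
    (hTconn : (SimpleGraph.fromEdgeSet T).Connected) (u : V)
    (F : Finset X.edgeSet) (hFne : F.Nonempty)
    (hFT : ∀ e ∈ F, (e : Sym2 V) ∉ T) (ε : X.edgeSet) (hε : ε ∈ F) :
    (∀ G ∈ {G' | ∃ B ∈ bondSpace X, G' = chiFinset X F + B},
      orbitOf X (edgeFlippingGroup X) G
        = orbitOf X (Subgroup.closure
            {g | ∃ ε' : X.edgeSet, ((ε' : Sym2 V) ∈ T ∨ ε' = ε) ∧ g = edgeFlip X ε'}) G) ∧
    (Odd (Fintype.card V) →
      ∀ G ∈ {G' | ∃ B ∈ bondSpace X, G' = chiFinset X F + B},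
        orbitOf X (edgeFlippingGroup X) G
          = {G' | ∃ B ∈ bondSpace X, G' = chiFinset X F + B}) ∧
    (Even (Fintype.card V) →
      (∀ G ∈ {G' | ∃ B ∈ bondSpace X, G' = chiFinset X F + B},
        orbitOf X (edgeFlippingGroup X) G
            = {G' | ∃ S : Finset V, u ∉ S ∧ Even S.card ∧
                G' = chiFinset X F + ∑ v ∈ S, edgeCut X {v}} ∨
        orbitOf X (edgeFlippingGroup X) G
            = {G' | ∃ S : Finset V, u ∉ S ∧ Odd S.card ∧
                G' = chiFinset X F + ∑ v ∈ S, edgeCut X {v}}) ∧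
      (∃ G ∈ {G' | ∃ B ∈ bondSpace X, G' = chiFinset X F + B},
        orbitOf X (edgeFlippingGroup X) G
            = {G' | ∃ S : Finset V, u ∉ S ∧ Even S.card ∧
                G' = chiFinset X F + ∑ v ∈ S, edgeCut X {v}}) ∧
      (∃ G ∈ {G' | ∃ B ∈ bondSpace X, G' = chiFinset X F + B},
        orbitOf X (edgeFlippingGroup X) G
            = {G' | ∃ S : Finset V, u ∉ S ∧ Odd S.card ∧
                G' = chiFinset X F + ∑ v ∈ S, edgeCut X {v}})) := by
  classical
  obtain ⟨v₀, hv₀⟩ : ∃ v₀ : V, v₀ ≠ u := by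
    have h1 : 1 < Fintype.card V := by omega
    exact Fintype.exists_ne_of_one_lt_card h1 u
  -- reachability implies membership in the small orbit
  have hle : Subgroup.closure
      {g | ∃ ε' : X.edgeSet, ((ε' : Sym2 V) ∈ T ∨ ε' = ε) ∧ g = edgeFlip X ε'}
      ≤ edgeFlippingGroup X := by
    rw [Subgroup.closure_le]
    rintro g ⟨ε', _, rfl⟩
    exact Subgroup.subset_closure ⟨ε', rfl⟩
  have hmr : ∀ S S' : Finset V, (S.card % 2 = S'.card % 2 ∨ Odd (Fintype.card V)) →
      Reach X T ε (conf X F S) (conf X F S') :=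
    main_reach hTsub hTconn hFT hε v₀
  have horb_full : ∀ (G G' : X.edgeSet → ZMod 2), Reach X T ε G G' →
      G' ∈ orbitOf X (edgeFlippingGroup X) G := by
    intro G G' h
    obtain ⟨g, hg, hgG⟩ := reach_orbit h
    exact ⟨g, hle hg, hgG⟩
  have hrep : ∀ G ∈ {G' | ∃ B ∈ bondSpace X, G' = chiFinset X F + B},
      ∃ S : Finset V, u ∉ S ∧ G = conf X F S := by
    rintro G ⟨B, hB, hG⟩
    obtain ⟨S, huS, hBS⟩ := rep u B hB
    exact ⟨S, huS, by rw [hG, hBS]; rfl⟩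
  have hconf_mem : ∀ S : Finset V,
      conf X F S ∈ {G' | ∃ B ∈ bondSpace X, G' = chiFinset X F + B} :=
    fun S => ⟨∑ v ∈ S, edgeCut X {v},
      Submodule.sum_mem _ (fun v _ => edgeCut_single_mem_bondSpace X v), rfl⟩
  have hsound_coset : ∀ g ∈ edgeFlippingGroup X,
      ∀ G ∈ {G' | ∃ B ∈ bondSpace X, G' = chiFinset X F + B},
        g.val G ∈ {G' | ∃ B ∈ bondSpace X, G' = chiFinset X F + B} := by
    intro g hg G hG
    exact full_sound X (fun G => ∃ B ∈ bondSpace X, G = chiFinset X F + B)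
      (fun ε' G hG => gen_coset ε' G hG) g hg G hG
  have hsound_par : Even (Fintype.card V) → ∀ (k : ℕ), ∀ g ∈ edgeFlippingGroup X,
      ∀ G, (∃ S : Finset V, u ∉ S ∧ S.card % 2 = k ∧ G = conf X F S) →
        (∃ S' : Finset V, u ∉ S' ∧ S'.card % 2 = k ∧ g.val G = conf X F S') := by
    intro hev k g hg G hG
    exact full_sound X
      (fun G => ∃ S : Finset V, u ∉ S ∧ S.card % 2 = k ∧ G = conf X F S)
      (fun ε' G hG => gen_parity hev u k ε' G hG) g hg G hG
  refine ⟨?_, ?_, ?_⟩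
  · -- orbits coincide
    intro G hG
    obtain ⟨S, huS, rfl⟩ := hrep G hG
    apply Set.Subset.antisymm
    · rintro G' ⟨g, hg, rfl⟩
      rcases Nat.even_or_odd (Fintype.card V) with hev | hodd
      · obtain ⟨S', huS', hpar, heq⟩ :=
          hsound_par hev (S.card % 2) g hg _ ⟨S, huS, rfl, rfl⟩
        rw [heq]
        exact reach_orbit (hmr S S' (Or.inl hpar.symm))
      · obtain ⟨S', huS', heq2⟩ := hrep _ (hsound_coset g hg _ (hconf_mem S))
        rw [heq2]
        exact reach_orbit (hmr S S' (Or.inr hodd))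
    · rintro G' ⟨g, hg, rfl⟩
      exact ⟨g, hle hg, rfl⟩
  · -- odd case: single orbit
    intro hodd G hG
    obtain ⟨S, huS, rfl⟩ := hrep G hG
    apply Set.Subset.antisymm
    · rintro G' ⟨g, hg, rfl⟩
      exact hsound_coset g hg _ (hconf_mem S)
    · intro G' hG'
      obtain ⟨S', hu', rfl⟩ := hrep G' hG'
      exact horb_full _ _ (hmr S S' (Or.inr hodd))
  · -- even case
    intro hev
    have key : ∀ S : Finset V, u ∉ S →
        orbitOf X (edgeFlippingGroup X) (conf X F S)
          = {G' | ∃ S' : Finset V, u ∉ S' ∧ S'.card % 2 = S.card % 2 ∧ G' = conf X F S'} := by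
      intro S huS
      apply Set.Subset.antisymm
      · rintro G' ⟨g, hg, rfl⟩
        exact hsound_par hev (S.card % 2) g hg _ ⟨S, huS, rfl, rfl⟩
      · rintro G' ⟨S', hu', hpar, rfl⟩
        exact horb_full _ _ (hmr S S' (Or.inl hpar.symm))
    have hEe : {G' | ∃ S' : Finset V, u ∉ S' ∧ S'.card % 2 = 0 ∧ G' = conf X F S'}
        = {G' | ∃ S : Finset V, u ∉ S ∧ Even S.card ∧
            G' = chiFinset X F + ∑ v ∈ S, edgeCut X {v}} := by
      ext G'
      constructor
      · rintro ⟨S', a, b, rfl⟩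
        exact ⟨S', a, Nat.even_iff.2 b, rfl⟩
      · rintro ⟨S', a, b, rfl⟩
        exact ⟨S', a, Nat.even_iff.1 b, rfl⟩
    have hEo : {G' | ∃ S' : Finset V, u ∉ S' ∧ S'.card % 2 = 1 ∧ G' = conf X F S'}
        = {G' | ∃ S : Finset V, u ∉ S ∧ Odd S.card ∧
            G' = chiFinset X F + ∑ v ∈ S, edgeCut X {v}} := by
      ext G'
      constructor
      · rintro ⟨S', a, b, rfl⟩
        exact ⟨S', a, Nat.odd_iff.2 b, rfl⟩
      · rintro ⟨S', a, b, rfl⟩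
        exact ⟨S', a, Nat.odd_iff.1 b, rfl⟩
    refine ⟨?_, ?_, ?_⟩
    · intro G hG
      obtain ⟨S, huS, rfl⟩ := hrep G hG
      rcases Nat.even_or_odd S.card with h | h
      · left
        rw [key S huS, Nat.even_iff.mp h, hEe]
      · right
        rw [key S huS, Nat.odd_iff.mp h, hEo]
    · refine ⟨conf X F ∅, hconf_mem ∅, ?_⟩
      rw [key ∅ (Finset.notMem_empty u), Finset.card_empty]
      rw [show (0 : ℕ) % 2 = 0 from rfl, hEe]
    · refine ⟨conf X F {v₀}, hconf_mem {v₀}, ?_⟩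
      rw [key {v₀} (by simp [Ne.symm hv₀]), Finset.card_singleton]
      rw [show (1 : ℕ) % 2 = 1 from rfl, hEo]
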